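/- Let V ⊆ ℂⁿ be open, Φ : V → ℝ, and let Ψ be a function, holomorphic on an open set U ⊆ ℂⁿ × ℂⁿ containing all points (x, conj y) with x, y ∈ V, such that Ψ(y, conj y) = Φ(y) for all y ∈ V. Let C₀ > 0 and δ > 0, and assume 2 Re Ψ(x, conj y) ≤ Φ(x) + Φ(y) − (1/C₀)|x−y|² for all x, y ∈ V. For z ∈ V define G_z(x, x̃, y, ỹ) := 2 Re Ψ(x, ỹ) − 2 Re Ψ(y, ỹ) + Φ(y) + Φ(conj x̃) − δ|x̃ − conj z|² − 2 Re Ψ(x, x̃). Then there exists C > 0, depending only on C₀ and δ, such that for all x, y, z ∈ V: G_z(x, conj x, y, conj y) ≤ −(1/C)(|x−z|² + |y−z|²); moreover G_z(z, conj z, z, conj z) = 0. -/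
import Mathlib


open Complex

noncomputable section

/-- `ℂⁿ` with its Euclidean (Hermitian) norm. -/
abbrev En (n : ℕ) := EuclideanSpace ℂ (Fin n)

/-- Componentwise complex conjugation on `ℂⁿ`. -/
def conjV (n : ℕ) (x : En n) : En n :=
  (WithLp.equiv 2 (Fin n → ℂ)).symm fun j => (starRingEnd ℂ) (x j)

lemma conjV_conjV (n : ℕ) (x : En n) : conjV n (conjV n x) = x := by
  ext j; simp [conjV]

lemma conjV_sub (n : ℕ) (x y : En n) : conjV n x - conjV n y = conjV n (x - y) := by
  ext j; simp [conjV]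

lemma norm_conjV (n : ℕ) (x : En n) : ‖conjV n x‖ = ‖x‖ := by
  simp [EuclideanSpace.norm_eq, conjV]

lemma norm_conjV_sub (n : ℕ) (x y : En n) : ‖conjV n x - conjV n y‖ = ‖x - y‖ := by
  rw [conjV_sub, norm_conjV]

/-- The plurisubharmonic weight
`G_z(x, x̃, y, ỹ) = 2ReΨ(x,ỹ) − 2ReΨ(y,ỹ) + Φ(y) + Φ(conj x̃) − δ|x̃ − conj z|² − 2ReΨ(x,x̃)`. -/
def Gfun (n : ℕ) (Ψ : En n × En n → ℂ) (Φ : En n → ℝ) (δ : ℝ) (z x xt y yt : En n) : ℝ :=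
  2 * (Ψ (x, yt)).re - 2 * (Ψ (y, yt)).re + Φ y + Φ (conjV n xt)
    - δ * ‖xt - conjV n z‖ ^ 2 - 2 * (Ψ (x, xt)).re

/-- the anti-diagonal contour `{x̃ = conj x, ỹ = conj y}` is a good contour
for `G_z`: `G_z(x, conj x, y, conj y) ≤ −(1/C)(|x−z|² + |y−z|²)`, and the critical value
vanishes: `G_z(z, conj z, z, conj z) = 0`. -/
theorem statement14 (n : ℕ)
    (V : Set (En n)) (hV : IsOpen V)
    (Φ : En n → ℝ)
    (Ψ : En n × En n → ℂ) (U : Set (En n × En n)) (hU : IsOpen U)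
    (hΨ : DifferentiableOn ℂ Ψ U)
    (hsub : ∀ x ∈ V, ∀ y ∈ V, (x, conjV n y) ∈ U)
    (hpol : ∀ y ∈ V, Ψ (y, conjV n y) = (Φ y : ℂ))
    (C₀ δ : ℝ) (hC₀ : 0 < C₀) (hδ : 0 < δ)
    (hub : ∀ x ∈ V, ∀ y ∈ V,
      2 * (Ψ (x, conjV n y)).re ≤ Φ x + Φ y - (1/C₀) * ‖x - y‖ ^ 2) :
    ∃ C : ℝ, 0 < C ∧
      (∀ x ∈ V, ∀ y ∈ V, ∀ z ∈ V,
        Gfun n Ψ Φ δ z x (conjV n x) y (conjV n y)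
          ≤ -(1/C) * (‖x - z‖ ^ 2 + ‖y - z‖ ^ 2)) ∧
      (∀ z ∈ V, Gfun n Ψ Φ δ z z (conjV n z) z (conjV n z) = 0) := by
  set c : ℝ := min (1 / (2 * C₀)) (δ / 3) with hc_def
  have hc : 0 < c := lt_min (by positivity) (by positivity)
  refine ⟨1 / c, by positivity, ?_, ?_⟩
  · intro x hx y hy z hz
    have hrex : (Ψ (x, conjV n x)).re = Φ x := by rw [hpol x hx]; simp
    have hrey : (Ψ (y, conjV n y)).re = Φ y := by rw [hpol y hy]; simp
    have hG : Gfun n Ψ Φ δ z x (conjV n x) y (conjV n y)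
        = 2 * (Ψ (x, conjV n y)).re - Φ x - Φ y - δ * ‖x - z‖ ^ 2 := by
      unfold Gfun
      rw [hrex, hrey, conjV_conjV, norm_conjV_sub]
      ring
    have hub' := hub x hx y hy
    have a := ‖x - z‖ ^ 2
    set a : ℝ := ‖x - z‖ ^ 2 with ha
    set b : ℝ := ‖y - z‖ ^ 2 with hb
    set d : ℝ := ‖x - y‖ ^ 2 with hd
    have ha0 : 0 ≤ a := by positivity
    have hb0 : 0 ≤ b := by positivity
    have hd0 : 0 ≤ d := by positivity
    have htri : b ≤ 2 * d + 2 * a := by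
      have h1 : ‖y - z‖ ≤ ‖x - y‖ + ‖x - z‖ := by
        calc ‖y - z‖ = ‖(y - x) + (x - z)‖ := by rw [show y - z = (y - x) + (x - z) by abel]
          _ ≤ ‖y - x‖ + ‖x - z‖ := norm_add_le _ _
          _ = ‖x - y‖ + ‖x - z‖ := by rw [norm_sub_rev]
      have := sq_nonneg (‖x - y‖ - ‖x - z‖)
      nlinarith [norm_nonneg (y - z), norm_nonneg (x - y), norm_nonneg (x - z)]
    have h2c : 2 * c ≤ 1 / C₀ := by
      have := min_le_left (1 / (2 * C₀)) (δ / 3)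
      rw [← hc_def, le_div_iff₀ (by positivity : (0:ℝ) < 2 * C₀)] at this
      rw [le_div_iff₀ hC₀]
      nlinarith
    have h3c : 3 * c ≤ δ := by
      have := min_le_right (1 / (2 * C₀)) (δ / 3)
      rw [← hc_def] at this
      linarith
    have key : c * (a + b) ≤ (1 / C₀) * d + δ * a := by
      have h1 : c * (a + b) ≤ c * (3 * a + 2 * d) := by
        apply mul_le_mul_of_nonneg_left _ hc.le
        linarith
      nlinarith
    have hinv : (1 : ℝ) / (1 / c) = c := by
      field_simp
    rw [hG, hinv]
    nlinarith
  · intro z hz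
    have hre : (Ψ (z, conjV n z)).re = Φ z := by rw [hpol z hz]; simp
    unfold Gfun
    rw [hre, conjV_conjV]
    simp
    ring
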